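/- For every λ ∈ ℂ \ [−1,1], with β = β(λ), one has (1/(2π)) ∫_{−π/2}^{3π/2} |exp(β·Log(i·tan(θ/2 − π/4)))|² dθ ≤ 3·e^{π|Im β|}·π^{1 − 2|Re β|}/(1 − 2|Re β|). (The integrand is defined for all θ in the range except θ = ±π/2, 3π/2, since i·tan(θ/2 − π/4) is then a nonzero purely imaginary number, which avoids the branch cut of Log.) -/

import Mathlib

open Real MeasureTheory intervalIntegral

/-- `β(λ) = (1/(2πi))·Log((λ+1)/(λ−1))`, with the principal branch of `Log`. -/
noncomputable def betaFn (lam : ℂ) : ℂ :=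
  (1 / (2 * (Real.pi : ℂ) * Complex.I)) * Complex.log ((lam + 1) / (lam - 1))

/-- The squared modulus of the boundary Szegő integrand. -/
noncomputable def szegoFb (β : ℂ) (φ : ℝ) : ℝ :=
  (‖Complex.exp (β * Complex.log (Complex.I * (Real.tan φ : ℂ)))‖) ^ 2

lemma beta_re (lam : ℂ) : (betaFn lam).re = Complex.arg ((lam+1)/(lam-1)) / (2*Real.pi) := by
  have h : (1 / (2 * (Real.pi : ℂ) * Complex.I)) = -Complex.I * (1/(2*Real.pi) : ℝ) := by
    have : (Complex.I : ℂ) ≠ 0 := Complex.I_ne_zero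
    have hpi : ((Real.pi : ℂ)) ≠ 0 := by exact_mod_cast Real.pi_ne_zero
    push_cast
    field_simp
    rw [Complex.I_sq]
    ring
  rw [betaFn, h]
  simp [Complex.mul_re, Complex.mul_im, Complex.log_im]
  ring

lemma beta_re_lt (lam : ℂ)
    (hlam : lam ∉ (Complex.ofReal '' Set.Icc (-1 : ℝ) 1)) :
    |(betaFn lam).re| < 1/2 := by
  set mu := (lam+1)/(lam-1) with hmu
  have harg_ne : Complex.arg mu ≠ Real.pi := by
    intro h
    rw [Complex.arg_eq_pi_iff] at h
    obtain ⟨hre, him⟩ := h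
    have hlam1 : lam ≠ 1 := by
      rintro rfl
      simp [hmu] at hre
    have hden : lam - 1 ≠ 0 := sub_ne_zero.2 hlam1
    set r := mu.re with hr
    have hmur : mu = (r : ℂ) := Complex.ext rfl (by simp [him])
    have hlam_eq : lam + 1 = mu * (lam - 1) := by
      rw [hmu]; field_simp
    have h1r : (1:ℝ) - r > 0 := by linarith
    have hlamval : lam = Complex.ofReal ((-1 - r)/(1 - r)) := by
      have hne : ((1:ℂ) - (r:ℂ)) ≠ 0 := by
        simpa using Complex.ofReal_ne_zero.mpr h1r.ne'
      rw [Complex.ofReal_div]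
      push_cast
      rw [eq_div_iff hne]
      rw [hmur] at hlam_eq
      linear_combination hlam_eq
    apply hlam
    refine ⟨(-1 - r)/(1 - r), ?_, hlamval.symm⟩
    constructor
    · rw [le_div_iff₀ h1r]; linarith
    · rw [div_le_one h1r]; linarith
  have h1 : Complex.arg mu < Real.pi := lt_of_le_of_ne (Complex.arg_le_pi mu) harg_ne
  have h2 : -Real.pi < Complex.arg mu := Complex.neg_pi_lt_arg mu
  rw [beta_re]
  rw [abs_div, abs_of_pos (by positivity : (0:ℝ) < 2*Real.pi), div_lt_iff₀ (by positivity)]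
  rw [abs_lt]
  constructor <;> nlinarith [Real.pi_pos]

lemma szego_pointwise_bound (β : ℂ) {φ : ℝ} (hφ : φ ∈ Set.Ioc (-(π/2)) (π/2)) :
    szegoFb β φ
      ≤ Real.exp (π * |β.im|) *
        ((π/2) ^ (2*|β.re|) * (π/2 - |φ|) ^ (-(2*|β.re|))
          + (π/2) ^ (2*|β.re|) * |φ| ^ (-(2*|β.re|))) := by
  rw [szegoFb]
  obtain ⟨hφ1, hφ2⟩ := hφ
  set a := |β.re| with ha
  set M := Real.exp (π * |β.im|) with hM
  have ha0 : 0 ≤ a := abs_nonneg _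
  have hM1 : (1:ℝ) ≤ M := Real.one_le_exp (by positivity)
  have hπ : (0:ℝ) < π := Real.pi_pos
  have hhalf : (0:ℝ) < π/2 := by linarith
  have hone : (π/2 : ℝ) ^ (2*a) * (π/2) ^ (-(2*a)) = 1 := by
    rw [← Real.rpow_add hhalf]; simp
  by_cases ht0 : Real.tan φ = 0
  · rw [ht0]
    simp only [Complex.ofReal_zero, mul_zero, Complex.log_zero, Complex.exp_zero,
      map_one, norm_one, one_pow]
    rcases eq_or_ne φ 0 with rfl | hφ0
    · have h2 : (0:ℝ) ≤ (π/2:ℝ) ^ (2*a) * |(0:ℝ)| ^ (-(2*a)) := by positivity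
      have h3 : π/2 - |(0:ℝ)| = π/2 := by simp
      rw [h3]
      nlinarith [hone]
    · have hsin : Real.sin φ ≠ 0 := fun h =>
        hφ0 ((Real.sin_eq_zero_iff_of_lt_of_lt (by linarith) (by linarith)).mp h)
      have hcos : Real.cos φ = 0 := by
        by_contra hc
        rw [Real.tan_eq_sin_div_cos, div_eq_zero_iff] at ht0
        tauto
      have hφval : φ = π/2 := by
        rcases lt_or_eq_of_le hφ2 with h | h
        · exact absurd hcos (ne_of_gt (Real.cos_pos_of_mem_Ioo ⟨by linarith, h⟩))
        · exact h
      subst hφval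
      rw [abs_of_pos hhalf, sub_self]
      have h1 : (0:ℝ) ≤ (π/2:ℝ) ^ (2*a) * (0:ℝ) ^ (-(2*a)) := by positivity
      nlinarith [hone]
  · -- main case
    have hφ2' : φ < π/2 := by
      rcases lt_or_eq_of_le hφ2 with h | h
      · exact h
      · exact absurd (h ▸ Real.tan_pi_div_two) ht0
    have hcos : 0 < Real.cos φ := Real.cos_pos_of_mem_Ioo ⟨by linarith, hφ2'⟩
    have hφ0 : φ ≠ 0 := by rintro rfl; simp at ht0
    have hφabs : 0 < |φ| := abs_pos.mpr hφ0
    have hφlt : |φ| < π/2 := abs_lt.mpr ⟨by linarith, hφ2'⟩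
    set t := Real.tan φ with htdef
    have htabs : 0 < |t| := abs_pos.mpr ht0
    have htan_eq : |t| = |Real.sin φ| / Real.cos φ := by
      rw [htdef, Real.tan_eq_sin_div_cos, abs_div, abs_of_pos hcos]
    have htcos : |t| * Real.cos φ = |Real.sin φ| := by
      rw [htan_eq, div_mul_cancel₀ _ hcos.ne']
    have hu : 0 < π/2 - |φ| := by linarith
    have hcos_ge : 2 * (π/2 - |φ|) ≤ π * Real.cos φ := by
      have h := Real.mul_le_sin (x := π/2 - |φ|) (by linarith) (by linarith [abs_nonneg φ])
      rw [Real.sin_pi_div_two_sub, Real.cos_abs] at h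
      rw [div_mul_eq_mul_div, div_le_iff₀ hπ] at h
      linarith
    have habs_le : |t| ≤ (π/2) * (π/2 - |φ|)⁻¹ := by
      rw [show (π/2) * (π/2 - |φ|)⁻¹ = (π/2) / (π/2 - |φ|) from (div_eq_mul_inv _ _).symm,
        le_div_iff₀ hu]
      nlinarith [mul_le_mul_of_nonneg_left hcos_ge (abs_nonneg t), htcos,
        Real.abs_sin_le_one φ]
    have habs_ge : (2/π) * |φ| ≤ |t| := by
      have h1 : (2/π) * |φ| ≤ |Real.sin φ| := Real.mul_abs_le_abs_sin hφlt.le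
      have h2 : |Real.sin φ| ≤ |t| := by
        rw [htan_eq, le_div_iff₀ hcos]
        nlinarith [Real.cos_le_one φ, abs_nonneg (Real.sin φ)]
      linarith
    set z := Complex.I * (t : ℂ) with hz
    have hzre : z.re = 0 := by simp [hz]
    have hzim : z.im = t := by simp [hz]
    have hzabs : ‖z‖ = |t| := by
      rw [hz, norm_mul, Complex.norm_I, Complex.norm_real, Real.norm_eq_abs, one_mul]
    have hargabs : |Complex.arg z| = π/2 := by
      rcases lt_or_gt_of_ne ht0 with h | h
      · rw [Complex.arg_eq_neg_pi_div_two_iff.mpr ⟨hzre, by rw [hzim]; exact h⟩, abs_neg,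
          abs_of_pos hhalf]
      · rw [Complex.arg_eq_pi_div_two_iff.mpr ⟨hzre, by rw [hzim]; exact h⟩, abs_of_pos hhalf]
    have hre : (β * Complex.log z).re = β.re * Real.log |t| - β.im * Complex.arg z := by
      rw [Complex.mul_re, Complex.log_re, Complex.log_im, hzabs]
    have hLHS : (‖Complex.exp (β * Complex.log z)‖)^2
        = |t| ^ (2*β.re) * Real.exp (-(2*β.im) * Complex.arg z) := by
      rw [Complex.norm_exp, ← Real.exp_nat_mul]
      rw [hre, Real.rpow_def_of_pos htabs, ← Real.exp_add]
      ring_nf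
    rw [hLHS]
    have hE : Real.exp (-(2*β.im) * Complex.arg z) ≤ M := by
      rw [hM]
      apply Real.exp_le_exp.mpr
      calc -(2*β.im) * Complex.arg z ≤ |(-(2*β.im)) * Complex.arg z| := le_abs_self _
        _ = 2 * |β.im| * |Complex.arg z| := by rw [abs_mul, abs_neg, abs_mul]; simp
        _ = π * |β.im| := by rw [hargabs]; ring
    have hT : |t| ^ (2*β.re) ≤ |t| ^ (2*a) + |t| ^ (-(2*a)) := by
      rcases le_or_gt 1 |t| with h1 | h1
      · have := Real.rpow_le_rpow_of_exponent_le h1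
          (by have := le_abs_self β.re; linarith : 2*β.re ≤ 2*a)
        have h0 : (0:ℝ) ≤ |t| ^ (-(2*a)) := Real.rpow_nonneg (abs_nonneg t) _
        linarith
      · have := Real.rpow_le_rpow_of_exponent_ge htabs h1.le
          (by have := neg_abs_le β.re; linarith : -(2*a) ≤ 2*β.re)
        have h0 : (0:ℝ) ≤ |t| ^ (2*a) := Real.rpow_nonneg (abs_nonneg t) _
        linarith
    have hT1 : |t| ^ (2*a) ≤ (π/2) ^ (2*a) * (π/2 - |φ|) ^ (-(2*a)) := by
      calc |t| ^ (2*a) ≤ ((π/2) * (π/2 - |φ|)⁻¹) ^ (2*a) :=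
            Real.rpow_le_rpow (abs_nonneg t) habs_le (by positivity)
        _ = (π/2) ^ (2*a) * (π/2 - |φ|) ^ (-(2*a)) := by
            rw [Real.mul_rpow hhalf.le (inv_nonneg.mpr hu.le),
              Real.inv_rpow hu.le, ← Real.rpow_neg hu.le]
    have hT2 : |t| ^ (-(2*a)) ≤ (π/2) ^ (2*a) * |φ| ^ (-(2*a)) := by
      calc |t| ^ (-(2*a)) ≤ ((2/π) * |φ|) ^ (-(2*a)) :=
            Real.rpow_le_rpow_of_nonpos (by positivity) habs_ge (by linarith)
        _ = (π/2) ^ (2*a) * |φ| ^ (-(2*a)) := by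
            rw [Real.mul_rpow (by positivity) (abs_nonneg φ),
              show (2/π : ℝ) = (π/2)⁻¹ by rw [inv_div],
              Real.inv_rpow hhalf.le, ← Real.rpow_neg hhalf.le, neg_neg]
    have hEpos : 0 < Real.exp (-(2*β.im) * Complex.arg z) := Real.exp_pos _
    calc |t| ^ (2*β.re) * Real.exp (-(2*β.im) * Complex.arg z)
        ≤ (|t| ^ (2*a) + |t| ^ (-(2*a))) * M := by
          apply mul_le_mul hT hE hEpos.le
          have h01 : (0:ℝ) ≤ |t| ^ (2*a) := Real.rpow_nonneg (abs_nonneg t) _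
          have h02 : (0:ℝ) ≤ |t| ^ (-(2*a)) := Real.rpow_nonneg (abs_nonneg t) _
          linarith
      _ ≤ ((π/2) ^ (2*a) * (π/2 - |φ|) ^ (-(2*a)) + (π/2) ^ (2*a) * |φ| ^ (-(2*a))) * M := by
          apply mul_le_mul_of_nonneg_right (by linarith) (by linarith)
      _ = M * ((π/2) ^ (2*a) * (π/2 - |φ|) ^ (-(2*a)) + (π/2) ^ (2*a) * |φ| ^ (-(2*a))) := by
          ring

lemma szego_eqOn_ae {f g : ℝ → ℝ} {a b : ℝ} (h : ∀ x ∈ Set.uIoc a b, f x = g x) :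
    f =ᵐ[volume.restrict (Set.uIoc a b)] g :=
  (ae_restrict_mem measurableSet_uIoc).mono h

section
variable {r : ℝ} (hr : -1 < r) {s : ℝ} (hs : 0 < s)
include hr hs

lemma szego_base_int : IntervalIntegrable (fun x : ℝ => x ^ r) volume 0 s :=
  intervalIntegral.intervalIntegrable_rpow' hr

omit hs in
lemma szego_base_val' (hr1 : r + 1 ≠ 0) : ∫ x in (0:ℝ)..s, x ^ r = s ^ (r+1) / (r+1) := by
  rw [integral_rpow (Or.inl hr), Real.zero_rpow hr1, sub_zero]

lemma szego_base_val : ∫ x in (0:ℝ)..s, x ^ r = s ^ (r+1) / (r+1) :=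
  szego_base_val' hr (by linarith)

lemma szego_abs_int_neg : IntervalIntegrable (fun x : ℝ => |x| ^ r) volume (-s) 0 := by
  have h1 : IntervalIntegrable (fun x : ℝ => (-x) ^ r) volume (-s) 0 := by
    simpa using ((IntervalIntegrable.iff_comp_neg (f := fun x : ℝ => x ^ r) (a := 0) (b := s)).mp (szego_base_int hr hs)).symm
  refine h1.congr (fun x hx => ?_)
  rw [Set.uIoc_of_le (by linarith : -s ≤ 0)] at hx
  rw [abs_of_nonpos hx.2]

lemma szego_abs_int_pos : IntervalIntegrable (fun x : ℝ => |x| ^ r) volume 0 s := by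
  refine (szego_base_int hr hs).congr (fun x hx => ?_)
  rw [Set.uIoc_of_le hs.le] at hx
  rw [abs_of_pos hx.1]

lemma szego_abs_int : IntervalIntegrable (fun x : ℝ => |x| ^ r) volume (-s) s :=
  (szego_abs_int_neg hr hs).trans (szego_abs_int_pos hr hs)

lemma szego_abs_val : ∫ x in (-s)..s, |x| ^ r = 2 * s ^ (r+1) / (r+1) := by
  rw [← integral_add_adjacent_intervals (szego_abs_int_neg hr hs) (szego_abs_int_pos hr hs)]
  have hpos : ∫ x in (0:ℝ)..s, |x| ^ r = s ^ (r+1) / (r+1) := by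
    rw [integral_congr (g := fun x : ℝ => x ^ r) fun x hx => ?_]
    · exact szego_base_val hr hs
    · rw [Set.uIcc_of_le hs.le] at hx
      rw [abs_of_nonneg hx.1]
  have hneg : ∫ x in (-s)..(0:ℝ), |x| ^ r = s ^ (r+1) / (r+1) := by
    rw [integral_congr (g := fun x : ℝ => (-x) ^ r) fun x hx => ?_]
    · rw [intervalIntegral.integral_comp_neg (fun x : ℝ => x ^ r)]
      simpa using szego_base_val hr hs
    · rw [Set.uIcc_of_le (by linarith : -s ≤ 0)] at hx
      rw [abs_of_nonpos hx.2]
  rw [hpos, hneg]; ring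

lemma szego_sub_abs_int_neg : IntervalIntegrable (fun x : ℝ => (s - |x|) ^ r) volume (-s) 0 := by
  have h1 : IntervalIntegrable (fun x : ℝ => (x + s) ^ r) volume (-s) 0 := by
    simpa using (szego_base_int hr hs).comp_add_right s
  refine h1.congr (fun x hx => ?_)
  rw [Set.uIoc_of_le (by linarith : -s ≤ 0)] at hx
  rw [abs_of_nonpos hx.2]; ring_nf

lemma szego_sub_abs_int_pos : IntervalIntegrable (fun x : ℝ => (s - |x|) ^ r) volume 0 s := by
  have h1 : IntervalIntegrable (fun x : ℝ => (s - x) ^ r) volume 0 s := by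
    simpa using ((szego_base_int hr hs).comp_sub_left s).symm
  refine h1.congr (fun x hx => ?_)
  rw [Set.uIoc_of_le hs.le] at hx
  rw [abs_of_pos hx.1]

lemma szego_sub_abs_int : IntervalIntegrable (fun x : ℝ => (s - |x|) ^ r) volume (-s) s :=
  (szego_sub_abs_int_neg hr hs).trans (szego_sub_abs_int_pos hr hs)

lemma szego_sub_abs_val : ∫ x in (-s)..s, (s - |x|) ^ r = 2 * s ^ (r+1) / (r+1) := by
  rw [← integral_add_adjacent_intervals (szego_sub_abs_int_neg hr hs)
    (szego_sub_abs_int_pos hr hs)]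
  have hpos : ∫ x in (0:ℝ)..s, (s - |x|) ^ r = s ^ (r+1) / (r+1) := by
    rw [integral_congr (g := fun x : ℝ => (s - x) ^ r) fun x hx => ?_]
    · rw [intervalIntegral.integral_comp_sub_left (fun x : ℝ => x ^ r) s]
      simpa using szego_base_val hr hs
    · rw [Set.uIcc_of_le hs.le] at hx
      rw [abs_of_nonneg hx.1]
  have hneg : ∫ x in (-s)..(0:ℝ), (s - |x|) ^ r = s ^ (r+1) / (r+1) := by
    rw [integral_congr (g := fun x : ℝ => (x + s) ^ r) fun x hx => ?_]
    · rw [intervalIntegral.integral_comp_add_right (fun x : ℝ => x ^ r) s]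
      simpa using szego_base_val hr hs
    · rw [Set.uIcc_of_le (by linarith : -s ≤ 0)] at hx
      rw [abs_of_nonpos hx.2]; ring_nf
  rw [hpos, hneg]; ring

end

/-- the squared `L²`-norm of the boundary values of the Szegő
    function is bounded:
    `(1/(2π)) ∫_{−π/2}^{3π/2} |exp(β·Log(i·tan(θ/2 − π/4)))|² dθ
       ≤ 3·e^{π|Im β|}·π^{1 − 2|Re β|}/(1 − 2|Re β|)`. -/
theorem szego_L2_bound (lam : ℂ)
    (hlam : lam ∉ (Complex.ofReal '' Set.Icc (-1 : ℝ) 1)) :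
    (1 / (2 * Real.pi)) *
        ∫ θ in (-Real.pi / 2)..(3 * Real.pi / 2),
          (‖Complex.exp (betaFn lam *
            Complex.log (Complex.I * (Real.tan (θ / 2 - Real.pi / 4) : ℂ)))‖) ^ 2
      ≤ 3 * Real.exp (Real.pi * |(betaFn lam).im|) *
          Real.pi ^ ((1 : ℝ) - 2 * |(betaFn lam).re|) / (1 - 2 * |(betaFn lam).re|) := by
  have hπ : (0:ℝ) < π := Real.pi_pos
  have hhalf : (0:ℝ) < π/2 := by linarith
  set β := betaFn lam with hβ
  set a := |β.re| with ha
  set M := Real.exp (π * |β.im|) with hM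
  have ha0 : 0 ≤ a := abs_nonneg _
  have ha2 : a < 1/2 := beta_re_lt lam hlam
  have hM1 : (1:ℝ) ≤ M := Real.one_le_exp (by positivity)
  have hr : (-1:ℝ) < -(2*a) := by linarith
  have hr1 : -(2*a) + 1 > 0 := by linarith
  -- step 1: substitution
  have e1 : (∫ θ in (-Real.pi / 2)..(3 * Real.pi / 2), szegoFb β (θ / 2 - Real.pi / 4))
      = (2:ℝ) • ∫ φ in (-(π/2))..(π/2), szegoFb β φ := by
    rw [integral_comp_div_sub (szegoFb β) two_ne_zero (Real.pi/4)]
    norm_num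
    rw [show -Real.pi / 2 / 2 - Real.pi/4 = -(π/2) by ring,
      show 3 * Real.pi / 2 / 2 - Real.pi/4 = π/2 by ring]
  -- step 2: the bound function is integrable with explicit integral
  set G : ℝ → ℝ := fun φ =>
    M * ((π/2) ^ (2*a) * (π/2 - |φ|) ^ (-(2*a)) + (π/2) ^ (2*a) * |φ| ^ (-(2*a))) with hG
  have hGint : IntervalIntegrable G volume (-(π/2)) (π/2) := by
    apply IntervalIntegrable.const_mul
    exact ((szego_sub_abs_int hr hhalf).const_mul _).add ((szego_abs_int hr hhalf).const_mul _)
  have hGval : ∫ φ in (-(π/2))..(π/2), G φ = 2 * π * M / (1 - 2*a) := by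
    rw [hG]
    rw [intervalIntegral.integral_const_mul]
    rw [intervalIntegral.integral_add ((szego_sub_abs_int hr hhalf).const_mul _)
      ((szego_abs_int hr hhalf).const_mul _)]
    rw [intervalIntegral.integral_const_mul, intervalIntegral.integral_const_mul]
    rw [szego_sub_abs_val hr hhalf, szego_abs_val hr hhalf]
    have hpow : (π/2 : ℝ) ^ (2*a) * (π/2) ^ (-(2*a) + 1) = π/2 := by
      rw [← Real.rpow_add hhalf]
      ring_nf
      exact Real.rpow_one _
    calc M * ((π/2) ^ (2*a) * (2 * (π/2) ^ (-(2*a)+1) / (-(2*a)+1))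
            + (π/2) ^ (2*a) * (2 * (π/2) ^ (-(2*a)+1) / (-(2*a)+1)))
        = ((π/2 : ℝ) ^ (2*a) * (π/2) ^ (-(2*a) + 1)) * (4 * M / (-(2*a)+1)) := by ring
      _ = (π/2) * (4 * M / (-(2*a)+1)) := by rw [hpow]
      _ = 2 * π * M / (1 - 2*a) := by rw [show -(2*a)+1 = 1-2*a by ring]; ring
  -- step 3: comparison
  have e2 : (∫ φ in (-(π/2))..(π/2), szegoFb β φ) ≤ 2 * π * M / (1 - 2*a) := by
    rw [← hGval, integral_of_le (by linarith : -(π/2) ≤ π/2),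
      integral_of_le (by linarith : -(π/2) ≤ π/2)]
    apply integral_mono_of_nonneg
    · exact ae_of_all _ fun φ => by simp only [szegoFb]; positivity
    · rw [← IntegrableOn,
        ← intervalIntegrable_iff_integrableOn_Ioc_of_le (by linarith : -(π/2) ≤ π/2)]
      exact hGint
    · exact (ae_restrict_mem measurableSet_Ioc).mono fun φ hφ => szego_pointwise_bound β hφ
  -- step 4: conclude
  have hFpos : 0 ≤ ∫ φ in (-(π/2))..(π/2), szegoFb β φ := by
    rw [integral_of_le (by linarith : -(π/2) ≤ π/2)]
    exact integral_nonneg fun φ => by simp only [szegoFb]; positivity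
  have hpow1 : (1:ℝ) ≤ π ^ ((1:ℝ) - 2*a) := by
    have := Real.rpow_le_rpow_of_exponent_le (by linarith [Real.pi_gt_three] : (1:ℝ) ≤ π)
      (by linarith : (0:ℝ) ≤ 1 - 2*a)
    simpa using this
  show (1 / (2 * Real.pi)) *
      (∫ θ in (-Real.pi / 2)..(3 * Real.pi / 2), szegoFb β (θ / 2 - Real.pi / 4))
    ≤ 3 * M * π ^ ((1:ℝ) - 2*a) / (1 - 2*a)
  rw [e1, smul_eq_mul]
  have step : (1 / (2 * Real.pi)) * ((2:ℝ) * ∫ φ in (-(π/2))..(π/2), szegoFb β φ)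
      ≤ (1 / (2 * Real.pi)) * (2 * (2 * π * M / (1 - 2*a))) := by
    apply mul_le_mul_of_nonneg_left (by linarith) (by positivity)
  refine step.trans ?_
  rw [show (1 / (2 * Real.pi)) * (2 * (2 * π * M / (1 - 2*a))) = (π/π) * (2 * M / (1 - 2*a)) by
    ring, div_self hπ.ne', one_mul]
  rw [div_le_div_iff₀ (by linarith) (by linarith)]
  have hMd : (0:ℝ) ≤ M * (1 - 2*a) := mul_nonneg (by positivity) (by linarith)
  have key := mul_le_mul_of_nonneg_left hpow1 hMd
  rw [mul_one] at key
  linarith [key, hMd]
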